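/- Let f, g be elements of the maximal ideal 𝔪 of R = ℂ⟦x,y⟧, both nonzero, and assume the quotient R/(f,g) is a finite-dimensional ℂ-vector space. Then I(f,g) ≥ m(f)·m(g), i.e., the intersection number of the two plane curve singularities is at least the product of their multiplicities. -/

import Mathlib

local notation "R" => MvPowerSeries (Fin 2) ℂ

/-- The intersection number of two plane curve singularities defined by `f` and `g`. -/
noncomputable def interNum (f g : R) : ℕ :=
  Module.finrank ℂ (R ⧸ Ideal.span {f, g})

/-- The multiplicity of a plane curve singularity defined by `f`: the largest `n`
with `f ∈ 𝔪 ^ n`. -/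
noncomputable def mult (f : R) : ℕ :=
  sSup {n : ℕ | f ∈ (IsLocalRing.maximalIdeal R) ^ n}

namespace Stmt3Aux

open MvPowerSeries Finset

/-- The ideal of power series of order at least `k`. -/
noncomputable def Ik (k : ℕ) : Ideal R where
  carrier := {f | ∀ d : Fin 2 →₀ ℕ, d 0 + d 1 < k → MvPowerSeries.coeff d f = 0}
  zero_mem' := by intro d _; simp
  add_mem' := by
    intro a b ha hb d hd
    simp [map_add, ha d hd, hb d hd]
  smul_mem' := by
    intro c f hf d hd
    rw [smul_eq_mul, MvPowerSeries.coeff_mul]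
    refine Finset.sum_eq_zero fun p hp => ?_
    rw [Finset.HasAntidiagonal.mem_antidiagonal] at hp
    have h2 : p.2 0 + p.2 1 < k := by
      have h0 : p.1 0 + p.2 0 = d 0 := by rw [← hp]; rfl
      have h1 : p.1 1 + p.2 1 = d 1 := by rw [← hp]; rfl
      omega
    rw [hf p.2 h2, mul_zero]

lemma mul_mem_Ik {a b : ℕ} {f g : R} (hf : f ∈ Ik a) (hg : g ∈ Ik b) :
    f * g ∈ Ik (a + b) := by
  intro d hd
  rw [MvPowerSeries.coeff_mul]
  refine Finset.sum_eq_zero fun p hp => ?_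
  rw [Finset.HasAntidiagonal.mem_antidiagonal] at hp
  have h0 : p.1 0 + p.2 0 = d 0 := by rw [← hp]; rfl
  have h1 : p.1 1 + p.2 1 = d 1 := by rw [← hp]; rfl
  rcases lt_or_ge (p.1 0 + p.1 1) a with h | h
  · rw [hf p.1 h, zero_mul]
  · rw [hg p.2 (by omega), mul_zero]

lemma maximalIdeal_le_Ik : IsLocalRing.maximalIdeal R ≤ Ik 1 := by
  intro f hf d hd
  have h0 : d = 0 := by
    ext i
    fin_cases i <;> simp <;> omega
  subst h0
  have : ¬ IsUnit f := hf
  rw [MvPowerSeries.isUnit_iff_constantCoeff] at this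
  simpa [MvPowerSeries.coeff_zero_eq_constantCoeff] using
    (by simpa using fun h => this (isUnit_iff_ne_zero.mpr h) : constantCoeff f = 0)

lemma pow_maximalIdeal_le_Ik (k : ℕ) : (IsLocalRing.maximalIdeal R) ^ k ≤ Ik k := by
  induction k with
  | zero => intro f _ d hd; omega
  | succ k ih =>
    rw [pow_succ]
    refine Ideal.mul_le.mpr fun a ha b hb => ?_
    exact mul_mem_Ik (ih ha) (maximalIdeal_le_Ik hb)

/-- Model finite set for exponents of degree `< k`. -/
def Tk (k : ℕ) : Finset ((_ : ℕ) × ℕ) := (Finset.range k).sigma fun a => Finset.range (k - a)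

def Dk (k : ℕ) := {d : Fin 2 →₀ ℕ // d 0 + d 1 < k}

noncomputable def dEquiv (k : ℕ) : Dk k ≃ (Tk k) where
  toFun d := ⟨⟨d.1 0, d.1 1⟩, by
    simp only [Tk, Finset.mem_sigma, Finset.mem_range]
    have := d.2; omega⟩
  invFun p := ⟨Finsupp.single 0 p.1.1 + Finsupp.single 1 p.1.2, by
    have := p.2
    simp only [Tk, Finset.mem_sigma, Finset.mem_range] at this
    simp [Finsupp.single_apply]
    omega⟩
  left_inv d := by
    apply Subtype.ext
    ext i
    fin_cases i <;> simp [Finsupp.single_apply]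
  right_inv p := by
    ext <;> simp [Finsupp.single_apply]

noncomputable instance (k : ℕ) : Fintype (Dk k) := Fintype.ofEquiv _ (dEquiv k).symm

/-- number of monomials of degree < k -/
noncomputable def N (k : ℕ) : ℕ := Fintype.card (Dk k)

lemma N_eq (k : ℕ) : N k = ∑ a ∈ Finset.range k, (k - a) := by
  rw [N, Fintype.card_congr (dEquiv k), Fintype.card_coe, Tk, Finset.card_sigma]
  simp

lemma two_mul_N (k : ℕ) : 2 * N k = k * (k + 1) := by
  rw [N_eq]
  induction k with
  | zero => simp
  | succ k ih =>
    rw [Finset.sum_range_succ]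
    have h : ∀ a ∈ Finset.range k, k + 1 - a = (k - a) + 1 := fun a ha => by
      rw [Finset.mem_range] at ha; omega
    rw [Finset.sum_congr rfl h, Finset.sum_add_distrib, Finset.sum_const, Finset.card_range,
      smul_eq_mul, mul_one, Nat.add_sub_cancel_left]
    nlinarith [ih]

lemma mem_Ik {k : ℕ} {f : R} :
    f ∈ Ik k ↔ ∀ d : Fin 2 →₀ ℕ, d 0 + d 1 < k → MvPowerSeries.coeff d f = 0 :=
  Iff.rfl

/-- The coefficient map recording all coefficients of degree `< k`. -/
noncomputable def cMap (k : ℕ) : R →ₗ[ℂ] (Dk k → ℂ) :=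
  LinearMap.pi fun d => MvPowerSeries.coeff d.1

lemma cMap_surjective (k : ℕ) : Function.Surjective (cMap k) := by
  intro v
  refine ⟨∑ d : Dk k, v d • MvPowerSeries.monomial d.1 1, ?_⟩
  funext e
  simp only [cMap, LinearMap.pi_apply, map_sum, map_smul]
  rw [Finset.sum_eq_single e]
  · simp [MvPowerSeries.coeff_monomial]
  · intro d _ hde
    rw [MvPowerSeries.coeff_monomial, if_neg fun h => hde (Subtype.ext h.symm)]
    simp
  · intro h
    exact absurd (Finset.mem_univ e) h

lemma ker_cMap (k : ℕ) : LinearMap.ker (cMap k) = (Ik k).restrictScalars ℂ := by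
  ext f
  constructor
  · intro hmem
    rw [Submodule.restrictScalars_mem, mem_Ik]
    intro d hd
    exact congrFun (LinearMap.mem_ker.mp hmem) ⟨d, hd⟩
  · intro hmem
    rw [Submodule.restrictScalars_mem, mem_Ik] at hmem
    rw [LinearMap.mem_ker]
    funext d
    exact hmem d.1 d.2

/-- The quotient by `Ik k` is the space of coefficient arrays of degree `< k`. -/
noncomputable def quotEquiv (k : ℕ) : (R ⧸ Ik k) ≃ₗ[ℂ] (Dk k → ℂ) :=
  (Submodule.Quotient.restrictScalarsEquiv ℂ (Ik k)).symm.trans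
    ((Submodule.quotEquivOfEq _ _ (ker_cMap k).symm).trans
      ((cMap k).quotKerEquivOfSurjective (cMap_surjective k)))

noncomputable instance (k : ℕ) : FiniteDimensional ℂ (R ⧸ Ik k) :=
  Module.Finite.equiv (quotEquiv k).symm

lemma finrank_quot_Ik (k : ℕ) : Module.finrank ℂ (R ⧸ Ik k) = N k := by
  rw [(quotEquiv k).finrank_eq, Module.finrank_fintype_fun_eq_card, N]

/-- Lift a `ℂ`-linear map through an ideal quotient. -/
noncomputable def liftI {M : Type*} [AddCommGroup M] [Module ℂ M] (I : Ideal R)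
    (φ : R →ₗ[ℂ] M) (h : ∀ x ∈ I, φ x = 0) : (R ⧸ I) →ₗ[ℂ] M :=
  (Submodule.liftQ (I.restrictScalars ℂ) φ fun x hx => h x hx).comp
    (Submodule.Quotient.restrictScalarsEquiv ℂ I).symm.toLinearMap

lemma liftI_mk {M : Type*} [AddCommGroup M] [Module ℂ M] (I : Ideal R)
    (φ : R →ₗ[ℂ] M) (h : ∀ x ∈ I, φ x = 0) (x : R) :
    liftI I φ h (Ideal.Quotient.mk I x) = φ x := by
  show (Submodule.liftQ (I.restrictScalars ℂ) φ fun x hx => h x hx)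
    ((Submodule.Quotient.restrictScalarsEquiv ℂ I).symm (Submodule.Quotient.mk x)) = φ x
  rw [Submodule.Quotient.restrictScalarsEquiv_symm_mk]
  rfl

end Stmt3Aux

set_option maxHeartbeats 2000000 in
/-- The intersection number of two plane curve singularities is at least the product
of their multiplicities. -/
theorem stmt3 (f g : R) (hf : f ≠ 0) (hg : g ≠ 0)
    (hfm : f ∈ IsLocalRing.maximalIdeal R)
    (hgm : g ∈ IsLocalRing.maximalIdeal R)
    (Hfg : FiniteDimensional ℂ (R ⧸ Ideal.span {f, g})) :
    mult f * mult g ≤ interNum f g := by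
  classical
  open Stmt3Aux in
  -- `mult h` is attained: `h ∈ 𝔪 ^ mult h`
  have key : ∀ h : R, h ≠ 0 → h ∈ (IsLocalRing.maximalIdeal R) ^ (mult h) := by
    intro h hne
    have hex : ∃ d : Fin 2 →₀ ℕ, MvPowerSeries.coeff d h ≠ 0 := by
      by_contra hco
      push_neg at hco
      exact hne (MvPowerSeries.ext fun d => by rw [hco d, map_zero])
    obtain ⟨d, hd⟩ := hex
    have hbdd : BddAbove {n : ℕ | h ∈ (IsLocalRing.maximalIdeal R) ^ n} := by
      refine ⟨d 0 + d 1, fun n hn => ?_⟩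
      by_contra hlt
      push_neg at hlt
      exact hd (Stmt3Aux.pow_maximalIdeal_le_Ik n hn d (by omega))
    exact Nat.sSup_mem ⟨0, by simp⟩ hbdd
  set m := mult f with hm
  set n := mult g with hn
  have hfI : f ∈ Stmt3Aux.Ik m := Stmt3Aux.pow_maximalIdeal_le_Ik m (key f hf)
  have hgI : g ∈ Stmt3Aux.Ik n := Stmt3Aux.pow_maximalIdeal_le_Ik n (key g hg)
  set J : Ideal R := Ideal.span {f, g} with hJ
  set K : ℕ := m + n with hK
  set π : R →ₗ[ℂ] (R ⧸ Stmt3Aux.Ik K) := (Ideal.Quotient.mkₐ ℂ (Stmt3Aux.Ik K)).toLinearMap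
    with hπ
  have hπ_apply : ∀ x : R, π x = Ideal.Quotient.mk (Stmt3Aux.Ik K) x := fun x => rfl
  set W : Submodule ℂ (R ⧸ Stmt3Aux.Ik K) := Submodule.map π (J.restrictScalars ℂ) with hW
  -- the surjection `R ⧸ J → (R ⧸ Ik K) ⧸ W`
  have hker : ∀ x ∈ J, (W.mkQ.comp π) x = 0 := by
    intro x hx
    rw [LinearMap.comp_apply, Submodule.mkQ_apply, Submodule.Quotient.mk_eq_zero]
    exact Submodule.mem_map_of_mem (by rwa [Submodule.restrictScalars_mem])
  set ρ : (R ⧸ J) →ₗ[ℂ] ((R ⧸ Stmt3Aux.Ik K) ⧸ W) := Stmt3Aux.liftI J (W.mkQ.comp π) hker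
    with hρ
  have hρs : Function.Surjective ρ := by
    intro z
    obtain ⟨y, rfl⟩ := Submodule.mkQ_surjective W z
    obtain ⟨x, rfl⟩ := Ideal.Quotient.mk_surjective (I := Stmt3Aux.Ik K) y
    exact ⟨Ideal.Quotient.mk J x, Stmt3Aux.liftI_mk _ _ _ x⟩
  have h1 : Module.finrank ℂ ((R ⧸ Stmt3Aux.Ik K) ⧸ W) ≤ Module.finrank ℂ (R ⧸ J) := by
    rw [← finrank_top ℂ ((R ⧸ Stmt3Aux.Ik K) ⧸ W), ← LinearMap.range_eq_top.mpr hρs]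
    exact ρ.finrank_range_le
  have h2 : Module.finrank ℂ ((R ⧸ Stmt3Aux.Ik K) ⧸ W) + Module.finrank ℂ W
      = Stmt3Aux.N K := by
    rw [← Stmt3Aux.finrank_quot_Ik K]
    exact Submodule.finrank_quotient_add_finrank W
  -- bound the dimension of `W`
  have hf0 : ∀ a ∈ Stmt3Aux.Ik n, (π.comp (LinearMap.mulLeft ℂ f)) a = 0 := by
    intro a ha
    rw [LinearMap.comp_apply, LinearMap.mulLeft_apply, hπ_apply,
      Ideal.Quotient.eq_zero_iff_mem]
    exact Stmt3Aux.mul_mem_Ik hfI ha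
  have hg0 : ∀ b ∈ Stmt3Aux.Ik m, (π.comp (LinearMap.mulLeft ℂ g)) b = 0 := by
    intro b hb
    rw [LinearMap.comp_apply, LinearMap.mulLeft_apply, hπ_apply,
      Ideal.Quotient.eq_zero_iff_mem]
    have : g * b ∈ Stmt3Aux.Ik (n + m) := Stmt3Aux.mul_mem_Ik hgI hb
    rwa [Nat.add_comm n m] at this
  set ψ : ((R ⧸ Stmt3Aux.Ik n) × (R ⧸ Stmt3Aux.Ik m)) →ₗ[ℂ] (R ⧸ Stmt3Aux.Ik K) :=
    (Stmt3Aux.liftI _ _ hf0).coprod (Stmt3Aux.liftI _ _ hg0) with hψ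
  have hWle : W ≤ LinearMap.range ψ := by
    rintro w ⟨x, hx, rfl⟩
    have hx' : x ∈ J := hx
    obtain ⟨a, b, hab⟩ := Ideal.mem_span_pair.mp hx' 
    refine ⟨(Ideal.Quotient.mk _ a, Ideal.Quotient.mk _ b), ?_⟩
    rw [hψ, LinearMap.coprod_apply, Stmt3Aux.liftI_mk, Stmt3Aux.liftI_mk,
      LinearMap.comp_apply, LinearMap.comp_apply, LinearMap.mulLeft_apply,
      LinearMap.mulLeft_apply, ← map_add]
    rw [show f * a + g * b = a * f + b * g by ring, hab]
  have h3 : Module.finrank ℂ W ≤ Stmt3Aux.N n + Stmt3Aux.N m := by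
    calc Module.finrank ℂ W ≤ Module.finrank ℂ (LinearMap.range ψ) :=
          Submodule.finrank_mono hWle
      _ ≤ Module.finrank ℂ ((R ⧸ Stmt3Aux.Ik n) × (R ⧸ Stmt3Aux.Ik m)) :=
          ψ.finrank_range_le
      _ = Stmt3Aux.N n + Stmt3Aux.N m := by
          rw [Module.finrank_prod, Stmt3Aux.finrank_quot_Ik, Stmt3Aux.finrank_quot_Ik]
  have e1 := Stmt3Aux.two_mul_N m
  have e2 := Stmt3Aux.two_mul_N n
  have e3 := Stmt3Aux.two_mul_N K
  rw [hK] at e3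
  have : interNum f g = Module.finrank ℂ (R ⧸ J) := rfl
  rw [this]
  nlinarith [h1, h2, h3, e1, e2, e3]
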